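/- Let A : [0,1]² → ℝ be continuous. The family of functions { (1/β) log φ_β : β > 1 }, where φ_β is the positive normalized eigenfunction of L_β, is equicontinuous; moreover, for any y,z ∈ [0,1], if |A(x,y) − A(x,z)| < ε for all x then |(1/β)log φ_β(y) − (1/β)log φ_β(z)| ≤ ε. -/

import Mathlib

open MeasureTheory unitInterval

private lemma integ (f : I → ℝ) (hf : Continuous f) : Integrable f :=
  hf.integrable_of_hasCompactSupport (HasCompactSupport.of_compactSpace _)

private lemma key (A : C(I × I, ℝ)) (φ : ℝ → C(I, ℝ)) (lam : ℝ → ℝ)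
    (hφpos : ∀ β : ℝ, 1 < β → ∀ x, 0 < φ β x)
    (hnorm : ∀ β : ℝ, 1 < β → ∫ x : I, φ β x = 1)
    (heig : ∀ β : ℝ, 1 < β →
      ∀ y : I, ∫ x : I, Real.exp (β * A (x, y)) * φ β x = lam β * φ β y)
    (β : ℝ) (hβ : 1 < β) (y z : I) (ε : ℝ)
    (h : ∀ x : I, |A (x, y) - A (x, z)| ≤ ε) :
    (1 / β) * Real.log (φ β y) - (1 / β) * Real.log (φ β z) ≤ ε := by
  have hβ0 : (0 : ℝ) < β := lt_trans one_pos hβ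
  have hInt : ∀ w : I, Integrable (fun x : I => Real.exp (β * A (x, w)) * φ β x) := by
    intro w
    exact integ _ (by fun_prop)
  have hIntφ : Integrable (fun x : I => (φ β) x) := integ _ (by fun_prop)
  -- positivity of lam β * φ β z
  have hlow : (0 : ℝ) < lam β * φ β z := by
    rw [← heig β hβ z]
    have hmono : ∫ x : I, Real.exp (β * (-‖A‖)) * φ β x
        ≤ ∫ x : I, Real.exp (β * A (x, z)) * φ β x := by
      apply integral_mono (hIntφ.const_mul _) (hInt z)
      intro x
      have hA : -‖A‖ ≤ A (x, z) := by
        have := abs_le.mp (A.norm_coe_le_norm (x, z))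
        linarith [this.1]
      have := Real.exp_le_exp.mpr (mul_le_mul_of_nonneg_left hA hβ0.le)
      exact mul_le_mul_of_nonneg_right this (hφpos β hβ x).le
    have heq : ∫ x : I, Real.exp (β * (-‖A‖)) * φ β x = Real.exp (β * (-‖A‖)) := by
      rw [integral_const_mul, hnorm β hβ, mul_one]
    linarith [Real.exp_pos (β * (-‖A‖))]
  have hφz := hφpos β hβ z
  have hφy := hφpos β hβ y
  have hlam : 0 < lam β := by
    rcases mul_pos_iff.mp hlow with ⟨h1, _⟩ | ⟨_, h2⟩
    · exact h1
    · linarith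
  -- main inequality
  have hup : lam β * φ β y ≤ Real.exp (β * ε) * (lam β * φ β z) := by
    rw [← heig β hβ y, ← heig β hβ z, ← integral_const_mul]
    apply integral_mono (hInt y) ((hInt z).const_mul _)
    intro x
    have hA : A (x, y) ≤ A (x, z) + ε := by
      have := abs_le.mp (h x)
      linarith [this.1]
    have h1 : β * A (x, y) ≤ β * ε + β * A (x, z) := by nlinarith
    have h2 : Real.exp (β * A (x, y)) ≤ Real.exp (β * ε) * Real.exp (β * A (x, z)) := by
      rw [← Real.exp_add]
      exact Real.exp_le_exp.mpr h1
    calc Real.exp (β * A (x, y)) * φ β x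
        ≤ (Real.exp (β * ε) * Real.exp (β * A (x, z))) * φ β x :=
          mul_le_mul_of_nonneg_right h2 (hφpos β hβ x).le
      _ = Real.exp (β * ε) * (Real.exp (β * A (x, z)) * φ β x) := by ring
  have hφle : φ β y ≤ Real.exp (β * ε) * φ β z := by
    have : lam β * φ β y ≤ lam β * (Real.exp (β * ε) * φ β z) := by
      calc lam β * φ β y ≤ Real.exp (β * ε) * (lam β * φ β z) := hup
        _ = lam β * (Real.exp (β * ε) * φ β z) := by ring
    exact le_of_mul_le_mul_left this hlam
  have hlog : Real.log (φ β y) ≤ β * ε + Real.log (φ β z) := by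
    have := Real.log_le_log hφy hφle
    rwa [Real.log_mul (Real.exp_ne_zero _) hφz.ne', Real.log_exp] at this
  have h2 := mul_le_mul_of_nonneg_left hlog (by positivity : (0:ℝ) ≤ 1 / β)
  have h3 : (1 / β) * (β * ε + Real.log (φ β z))
      = ε + (1 / β) * Real.log (φ β z) := by field_simp
  linarith [h2, h3.le]

private lemma keyabs (A : C(I × I, ℝ)) (φ : ℝ → C(I, ℝ)) (lam : ℝ → ℝ)
    (hφpos : ∀ β : ℝ, 1 < β → ∀ x, 0 < φ β x)
    (hnorm : ∀ β : ℝ, 1 < β → ∫ x : I, φ β x = 1)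
    (heig : ∀ β : ℝ, 1 < β →
      ∀ y : I, ∫ x : I, Real.exp (β * A (x, y)) * φ β x = lam β * φ β y)
    (β : ℝ) (hβ : 1 < β) (y z : I) (ε : ℝ)
    (h : ∀ x : I, |A (x, y) - A (x, z)| ≤ ε) :
    |(1 / β) * Real.log (φ β y) - (1 / β) * Real.log (φ β z)| ≤ ε := by
  refine abs_sub_le_iff.mpr ⟨key A φ lam hφpos hnorm heig β hβ y z ε h, ?_⟩
  refine key A φ lam hφpos hnorm heig β hβ z y ε (fun x => ?_)
  rw [abs_sub_comm]; exact h x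

theorem stmt6 (A : C(I × I, ℝ)) (φ : ℝ → C(I, ℝ)) (lam : ℝ → ℝ)
    (hφpos : ∀ β : ℝ, 1 < β → ∀ x, 0 < φ β x)
    (hnorm : ∀ β : ℝ, 1 < β → ∫ x : I, φ β x = 1)
    (heig : ∀ β : ℝ, 1 < β →
      ∀ y : I, ∫ x : I, Real.exp (β * A (x, y)) * φ β x = lam β * φ β y) :
    Equicontinuous (fun b : {β : ℝ // 1 < β} => fun x : I => (1 / b.1) * Real.log (φ b.1 x)) ∧
    ∀ β : ℝ, 1 < β → ∀ y z : I, ∀ ε > 0,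
      (∀ x : I, |A (x, y) - A (x, z)| < ε) →
      |(1 / β) * Real.log (φ β y) - (1 / β) * Real.log (φ β z)| ≤ ε := by
  constructor
  · intro x0
    rw [Metric.equicontinuousAt_iff]
    intro ε hε
    have hUC : UniformContinuous A := CompactSpace.uniformContinuous_of_continuous A.continuous
    obtain ⟨δ, hδ, hδ'⟩ := Metric.uniformContinuous_iff.mp hUC (ε / 2) (by linarith)
    refine ⟨δ, hδ, fun y hy b => ?_⟩
    rw [dist_comm] at hy
    have hb : ∀ x : I, |A (x, y) - A (x, x0)| ≤ ε / 2 := by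
      intro x
      have hd : dist ((x, y) : I × I) (x, x0) < δ := by
        rw [Prod.dist_eq]
        simp only [dist_self]
        rw [max_eq_right dist_nonneg]
        rwa [dist_comm]
      have := hδ' hd
      rw [Real.dist_eq] at this
      exact this.le
    have := keyabs A φ lam hφpos hnorm heig b.1 b.2 y x0 (ε / 2) hb
    rw [Real.dist_eq]
    rw [abs_sub_comm] at this
    calc |(1 / b.1) * Real.log (φ b.1 x0) - (1 / b.1) * Real.log (φ b.1 y)| ≤ ε / 2 := this
      _ < ε := by linarith
  · intro β hβ y z ε hε h
    exact keyabs A φ lam hφpos hnorm heig β hβ y z ε (fun x => (h x).le)
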